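/- The function A(x,t) = e^{i·t²/10} · e^{(1+i)x - t²/2} / (1 + (1/4)·e^{2x - t²}) satisfies i·A_t + (t/2)·A_xx + (t/5)·A + t·|A|²·A = 0 for all (x,t) ∈ ℝ². -/

import Mathlib

open Complex

private lemma hasDerivAt_cexp_lin (a b : ℂ) (x : ℝ) :
    HasDerivAt (fun y : ℝ => Complex.exp (a * (y : ℂ) + b))
      (a * Complex.exp (a * (x : ℂ) + b)) x := by
  have h : HasDerivAt (fun z : ℂ => Complex.exp (a * z + b))
      (Complex.exp (a * (x : ℂ) + b) * a) ((x : ℝ) : ℂ) := by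
    simpa using (((hasDerivAt_id ((x : ℝ) : ℂ)).const_mul a).add_const b).cexp
  simpa [mul_comm] using h.comp_ofReal

private lemma hasDerivAt_cexp_quad (a b : ℂ) (t : ℝ) :
    HasDerivAt (fun τ : ℝ => Complex.exp (a * (τ : ℂ) ^ 2 + b))
      (2 * a * (t : ℂ) * Complex.exp (a * (t : ℂ) ^ 2 + b)) t := by
  have h : HasDerivAt (fun z : ℂ => Complex.exp (a * z ^ 2 + b))
      (Complex.exp (a * ((t : ℝ) : ℂ) ^ 2 + b) * (a * (2 * ((t : ℝ) : ℂ) ^ 1)))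
      ((t : ℝ) : ℂ) := by
    simpa using (((hasDerivAt_pow 2 ((t : ℝ) : ℂ)).const_mul a).add_const b).cexp
  have h2 := h.comp_ofReal
  convert h2 using 1
  ring

private lemma D_ne (x t : ℝ) :
    (1 : ℂ) + 1 / 4 * Complex.exp (2 * (x : ℂ) - (t : ℂ) ^ 2) ≠ 0 := by
  have h : (1 : ℂ) + 1 / 4 * Complex.exp (2 * (x : ℂ) - (t : ℂ) ^ 2)
      = ((1 + 1 / 4 * Real.exp (2 * x - t ^ 2) : ℝ) : ℂ) := by
    push_cast [Complex.ofReal_exp]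
    norm_num
  rw [h]
  exact_mod_cast (by positivity : (1 : ℝ) + 1 / 4 * Real.exp (2 * x - t ^ 2) ≠ 0)

set_option maxHeartbeats 2000000 in
/-- The one-soliton solution of the vcNLS equation with linear coefficients
`α(t) = t/2`, `β(t) = t/5`, `γ(t) = t`. -/
theorem vcNLS_soliton_linear_coefficients :
    let A : ℝ → ℝ → ℂ := fun x t =>
      Complex.exp (Complex.I * (t : ℂ) ^ 2 / 10) *
        Complex.exp ((1 + Complex.I) * (x : ℂ) - (t : ℂ) ^ 2 / 2) /
        (1 + (1 / 4) * Complex.exp (2 * (x : ℂ) - (t : ℂ) ^ 2))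
    ∀ x t : ℝ,
      Complex.I * deriv (fun τ => A x τ) t
        + ((t / 2 : ℝ) : ℂ) * deriv (deriv (fun y => A y t)) x
        + ((t / 5 : ℝ) : ℂ) * A x t
        + (t : ℂ) * (‖A x t‖ : ℂ) ^ 2 * A x t = 0 := by
  intro A x t
  have hDne : ∀ y : ℝ, (1 : ℂ) + 1 / 4 * Complex.exp (2 * (y : ℂ) - (t : ℂ) ^ 2) ≠ 0 :=
    fun y => D_ne y t
  -- atoms
  set P : ℂ := Complex.exp (Complex.I * (t : ℂ) ^ 2 / 10) with hPdef
  -- time derivative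
  have hPt : HasDerivAt (fun τ : ℝ => Complex.exp (Complex.I * (τ : ℂ) ^ 2 / 10))
      (Complex.I * (t : ℂ) / 5 * P) t := by
    have h := hasDerivAt_cexp_quad (Complex.I / 10) 0 t
    have e1 : (fun τ : ℝ => Complex.exp (Complex.I / 10 * (τ : ℂ) ^ 2 + 0))
        = fun τ : ℝ => Complex.exp (Complex.I * (τ : ℂ) ^ 2 / 10) := by
      funext τ; congr 1 <;> ring
    rw [e1] at h
    convert h using 1
    rw [hPdef]; congr 1
    · ring
    · congr 1; ring
  have hNt : HasDerivAt (fun τ : ℝ =>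
        Complex.exp ((1 + Complex.I) * (x : ℂ) - (τ : ℂ) ^ 2 / 2))
      (-(t : ℂ) * Complex.exp ((1 + Complex.I) * (x : ℂ) - (t : ℂ) ^ 2 / 2)) t := by
    have h := hasDerivAt_cexp_quad (-(1/2)) ((1 + Complex.I) * (x : ℂ)) t
    have e1 : (fun τ : ℝ => Complex.exp (-(1/2) * (τ : ℂ) ^ 2 + (1 + Complex.I) * (x : ℂ)))
        = fun τ : ℝ => Complex.exp ((1 + Complex.I) * (x : ℂ) - (τ : ℂ) ^ 2 / 2) := by
      funext τ; congr 1 <;> ring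
    rw [e1] at h
    convert h using 1
    congr 1
    · ring
    · congr 1; ring
  have hEt : HasDerivAt (fun τ : ℝ => Complex.exp (2 * (x : ℂ) - (τ : ℂ) ^ 2))
      (-2 * (t : ℂ) * Complex.exp (2 * (x : ℂ) - (t : ℂ) ^ 2)) t := by
    have h := hasDerivAt_cexp_quad (-1) (2 * (x : ℂ)) t
    have e1 : (fun τ : ℝ => Complex.exp (-1 * (τ : ℂ) ^ 2 + 2 * (x : ℂ)))
        = fun τ : ℝ => Complex.exp (2 * (x : ℂ) - (τ : ℂ) ^ 2) := by
      funext τ; congr 1 <;> ring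
    rw [e1] at h
    convert h using 1
    congr 1
    · ring
    · congr 1; ring
  have hDt : HasDerivAt (fun τ : ℝ =>
        (1 : ℂ) + 1 / 4 * Complex.exp (2 * (x : ℂ) - (τ : ℂ) ^ 2))
      (1 / 4 * (-2 * (t : ℂ) * Complex.exp (2 * (x : ℂ) - (t : ℂ) ^ 2))) t :=
    (hEt.const_mul (1/4)).const_add 1
  have hAt : HasDerivAt (fun τ : ℝ => A x τ)
      (((Complex.I * (t : ℂ) / 5 * P
          * Complex.exp ((1 + Complex.I) * (x : ℂ) - (t : ℂ) ^ 2 / 2)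
        + P * (-(t : ℂ) * Complex.exp ((1 + Complex.I) * (x : ℂ) - (t : ℂ) ^ 2 / 2)))
          * ((1 : ℂ) + 1 / 4 * Complex.exp (2 * (x : ℂ) - (t : ℂ) ^ 2))
        - P * Complex.exp ((1 + Complex.I) * (x : ℂ) - (t : ℂ) ^ 2 / 2)
          * (1 / 4 * (-2 * (t : ℂ) * Complex.exp (2 * (x : ℂ) - (t : ℂ) ^ 2))))
        / ((1 : ℂ) + 1 / 4 * Complex.exp (2 * (x : ℂ) - (t : ℂ) ^ 2)) ^ 2) t := by
    have := (hPt.mul hNt).div hDt (hDne x)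
    simpa [A, Pi.mul_def, Pi.div_def] using this
  -- space derivatives
  have hNx : ∀ y : ℝ, HasDerivAt (fun y' : ℝ =>
        Complex.exp ((1 + Complex.I) * (y' : ℂ) - (t : ℂ) ^ 2 / 2))
      ((1 + Complex.I) * Complex.exp ((1 + Complex.I) * (y : ℂ) - (t : ℂ) ^ 2 / 2)) y := by
    intro y
    have h := hasDerivAt_cexp_lin (1 + Complex.I) (-(t : ℂ) ^ 2 / 2) y
    have e1 : (fun y' : ℝ =>
          Complex.exp ((1 + Complex.I) * (y' : ℂ) + -(t : ℂ) ^ 2 / 2))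
        = fun y' : ℝ => Complex.exp ((1 + Complex.I) * (y' : ℂ) - (t : ℂ) ^ 2 / 2) := by
      funext y'; congr 1 <;> ring
    rw [e1] at h
    simpa [← sub_eq_add_neg, neg_div] using h
  have hEx : ∀ y : ℝ, HasDerivAt (fun y' : ℝ =>
        Complex.exp (2 * (y' : ℂ) - (t : ℂ) ^ 2))
      (2 * Complex.exp (2 * (y : ℂ) - (t : ℂ) ^ 2)) y := by
    intro y
    have h := hasDerivAt_cexp_lin 2 (-(t : ℂ) ^ 2) y
    have e1 : (fun y' : ℝ => Complex.exp (2 * (y' : ℂ) + -(t : ℂ) ^ 2))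
        = fun y' : ℝ => Complex.exp (2 * (y' : ℂ) - (t : ℂ) ^ 2) := by
      funext y'; congr 1 <;> ring
    rw [e1] at h
    simpa [← sub_eq_add_neg, neg_div] using h
  have hDx : ∀ y : ℝ, HasDerivAt (fun y' : ℝ =>
        (1 : ℂ) + 1 / 4 * Complex.exp (2 * (y' : ℂ) - (t : ℂ) ^ 2))
      (1 / 4 * (2 * Complex.exp (2 * (y : ℂ) - (t : ℂ) ^ 2))) y :=
    fun y => ((hEx y).const_mul (1/4)).const_add 1
  set G : ℝ → ℂ := fun y =>
      ((P * ((1 + Complex.I) * Complex.exp ((1 + Complex.I) * (y : ℂ) - (t : ℂ) ^ 2 / 2)))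
          * ((1 : ℂ) + 1 / 4 * Complex.exp (2 * (y : ℂ) - (t : ℂ) ^ 2))
        - P * Complex.exp ((1 + Complex.I) * (y : ℂ) - (t : ℂ) ^ 2 / 2)
          * (1 / 4 * (2 * Complex.exp (2 * (y : ℂ) - (t : ℂ) ^ 2))))
        / ((1 : ℂ) + 1 / 4 * Complex.exp (2 * (y : ℂ) - (t : ℂ) ^ 2)) ^ 2 with hGdef
  have hAx : ∀ y : ℝ, HasDerivAt (fun y' : ℝ => A y' t) (G y) y := by
    intro y
    have := (((hNx y).const_mul P).div (hDx y) (hDne y))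
    simpa [A, hGdef, Pi.div_def] using this
  have hd1 : (deriv fun y : ℝ => A y t) = G := funext fun y => (hAx y).deriv
  -- second space derivative
  have hNum : HasDerivAt (fun y : ℝ =>
      (P * ((1 + Complex.I) * Complex.exp ((1 + Complex.I) * (y : ℂ) - (t : ℂ) ^ 2 / 2)))
          * ((1 : ℂ) + 1 / 4 * Complex.exp (2 * (y : ℂ) - (t : ℂ) ^ 2))
        - P * Complex.exp ((1 + Complex.I) * (y : ℂ) - (t : ℂ) ^ 2 / 2)
          * (1 / 4 * (2 * Complex.exp (2 * (y : ℂ) - (t : ℂ) ^ 2))))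
      ((P * ((1 + Complex.I) * ((1 + Complex.I)
            * Complex.exp ((1 + Complex.I) * (x : ℂ) - (t : ℂ) ^ 2 / 2))))
          * ((1 : ℂ) + 1 / 4 * Complex.exp (2 * (x : ℂ) - (t : ℂ) ^ 2))
        + (P * ((1 + Complex.I) * Complex.exp ((1 + Complex.I) * (x : ℂ) - (t : ℂ) ^ 2 / 2)))
          * (1 / 4 * (2 * Complex.exp (2 * (x : ℂ) - (t : ℂ) ^ 2)))
        - (P * ((1 + Complex.I) * Complex.exp ((1 + Complex.I) * (x : ℂ) - (t : ℂ) ^ 2 / 2))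
            * (1 / 4 * (2 * Complex.exp (2 * (x : ℂ) - (t : ℂ) ^ 2)))
          + P * Complex.exp ((1 + Complex.I) * (x : ℂ) - (t : ℂ) ^ 2 / 2)
            * (1 / 4 * (2 * (2 * Complex.exp (2 * (x : ℂ) - (t : ℂ) ^ 2)))))) x := by
    exact ((((hNx x).const_mul (1 + Complex.I)).const_mul P).mul (hDx x)).sub
      ((((hNx x).const_mul P)).mul (((hEx x).const_mul 2).const_mul (1/4)))
  have hDen : HasDerivAt (fun y : ℝ =>
      ((1 : ℂ) + 1 / 4 * Complex.exp (2 * (y : ℂ) - (t : ℂ) ^ 2)) ^ 2)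
      (2 * ((1 : ℂ) + 1 / 4 * Complex.exp (2 * (x : ℂ) - (t : ℂ) ^ 2)) ^ 1
        * (1 / 4 * (2 * Complex.exp (2 * (x : ℂ) - (t : ℂ) ^ 2)))) x := by
    have h := (hDx x).mul (hDx x)
    have e1 : (fun y : ℝ => ((1 : ℂ) + 1 / 4 * Complex.exp (2 * (y : ℂ) - (t : ℂ) ^ 2))
          * ((1 : ℂ) + 1 / 4 * Complex.exp (2 * (y : ℂ) - (t : ℂ) ^ 2)))
        = fun y : ℝ => ((1 : ℂ) + 1 / 4 * Complex.exp (2 * (y : ℂ) - (t : ℂ) ^ 2)) ^ 2 := by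
      funext y; ring
    simp only [Pi.mul_def] at h
    rw [e1] at h
    convert h using 1
    · rfl
    ring
  have hG := hNum.div hDen (pow_ne_zero 2 (hDne x))
  simp only [Pi.div_def] at hG
  -- norm
  have hnA : ((‖A x t‖ : ℝ) : ℂ) ^ 2
      = Complex.exp (2 * (x : ℂ) - (t : ℂ) ^ 2)
        / ((1 : ℂ) + 1 / 4 * Complex.exp (2 * (x : ℂ) - (t : ℂ) ^ 2)) ^ 2 := by
    have hDr : (1 : ℂ) + 1 / 4 * Complex.exp (2 * (x : ℂ) - (t : ℂ) ^ 2)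
        = ((1 + 1 / 4 * Real.exp (2 * x - t ^ 2) : ℝ) : ℂ) := by
      push_cast [Complex.ofReal_exp]; norm_num
    have hr : ‖A x t‖ ^ 2 = Real.exp (2 * x - t ^ 2)
        / (1 + 1 / 4 * Real.exp (2 * x - t ^ 2)) ^ 2 := by
      simp only [A, hDr, norm_div, norm_mul, Complex.norm_exp,
        Complex.norm_real, Real.norm_eq_abs]
      rw [abs_of_pos (by positivity : (0:ℝ) < 1 + 1 / 4 * Real.exp (2 * x - t ^ 2))]
      have h1 : (Complex.I * (t : ℂ) ^ 2 / 10).re = 0 := by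
        simp [Complex.div_re, ← Complex.ofReal_pow]
      have h2 : (((1 : ℂ) + Complex.I) * (x : ℂ) - (t : ℂ) ^ 2 / 2).re = x - t ^ 2 / 2 := by
        simp [Complex.div_re, add_mul, Complex.normSq, ← Complex.ofReal_pow]
      rw [h1, h2, Real.exp_zero, one_mul, div_pow, pow_two, ← Real.exp_add]
      have h3 : (x - t ^ 2 / 2) + (x - t ^ 2 / 2) = 2 * x - t ^ 2 := by ring
      rw [h3]
    rw [← Complex.ofReal_pow, hr, hDr]
    push_cast [Complex.ofReal_exp]
    norm_num
  -- assemble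
  rw [hAt.deriv, hd1, hG.deriv]
  have hA0 : A x t = P * Complex.exp ((1 + Complex.I) * (x : ℂ) - (t : ℂ) ^ 2 / 2)
      / ((1 : ℂ) + 1 / 4 * Complex.exp (2 * (x : ℂ) - (t : ℂ) ^ 2)) := rfl
  rw [hA0, hnA]
  push_cast
  set E : ℂ := Complex.exp (2 * (x : ℂ) - (t : ℂ) ^ 2) with hEdef
  set N : ℂ := Complex.exp ((1 + Complex.I) * (x : ℂ) - (t : ℂ) ^ 2 / 2) with hNdef
  have hd : (1 : ℂ) + 1 / 4 * E ≠ 0 := hDne x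
  set d : ℂ := 1 + 1 / 4 * E with hddef
  have hE : E = 4 * (d - 1) := by rw [hddef]; ring
  clear_value d
  clear hEdef hddef
  rw [hE]
  field_simp
  ring_nf
  simp only [Complex.I_sq]
  field_simp
  ring
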